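/- In the poset Co^(m) of m-colored compositions with m ≥ 2, the Möbius function of a lower interval satisfies: μ(∅, α) = (−1)^|α| if all parts of α have size 1 and no two consecutive parts share the same color, and μ(∅, α) = 0 otherwise (for α ≠ ∅). -/

import Mathlib

/-- `CCover m α β` means `β` covers `α` in the poset `Co^(m)` of `m`-colored
compositions (parts are pairs (color, size)).  The covers of `∅` are the `m`
one-part compositions of `1`; otherwise `β` is obtained from `α` by
(1) adding `1` to a part keeping its color, (2) adding `1` to a part and
splitting it into two parts of the same color, or (3) splitting a part of color
`c` into `(c,h), (c',1), (c,a-h)` with `c' ≠ c`, parts of size `0` being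
deleted. -/
def CCover (m : ℕ) (α β : List (Fin m × ℕ)) : Prop :=
  (α = [] ∧ ∃ c : Fin m, β = [(c, 1)]) ∨
  (∃ (l r : List (Fin m × ℕ)) (c : Fin m) (a : ℕ),
      α = l ++ (c, a) :: r ∧ β = l ++ (c, a + 1) :: r) ∨
  (∃ (l r : List (Fin m × ℕ)) (c : Fin m) (a h : ℕ), h < a ∧
      α = l ++ (c, a) :: r ∧ β = l ++ (c, h + 1) :: (c, a - h) :: r) ∨
  (∃ (l r : List (Fin m × ℕ)) (c c' : Fin m) (a h : ℕ), c' ≠ c ∧ h ≤ a ∧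
      α = l ++ (c, a) :: r ∧
      β = l ++ ((if h = 0 then [] else [(c, h)]) ++ (c', 1) ::
            (if h = a then [] else [(c, a - h)])) ++ r)

/-- The partial order of `Co^(m)`: reflexive-transitive closure of the covering
relation. -/
def CLe (m : ℕ) : List (Fin m × ℕ) → List (Fin m × ℕ) → Prop :=
  Relation.ReflTransGen (CCover m)

open List

variable {m : ℕ}

/-- word of a colored composition -/
def wrd (α : List (Fin m × ℕ)) : List (Fin m) := α.flatMap fun p => List.replicate p.2 p.1

@[simp] lemma wrd_nil : wrd ([] : List (Fin m × ℕ)) = [] := rfl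

@[simp] lemma wrd_cons (p : Fin m × ℕ) (α : List (Fin m × ℕ)) :
    wrd (p :: α) = List.replicate p.2 p.1 ++ wrd α := rfl

@[simp] lemma wrd_append (α β : List (Fin m × ℕ)) : wrd (α ++ β) = wrd α ++ wrd β := by
  simp [wrd]

/-- size of a colored composition -/
def sz (α : List (Fin m × ℕ)) : ℕ := (α.map Prod.snd).sum

@[simp] lemma sz_nil : sz ([] : List (Fin m × ℕ)) = 0 := rfl
@[simp] lemma sz_cons (p : Fin m × ℕ) (α : List (Fin m × ℕ)) : sz (p :: α) = p.2 + sz α := rfl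
@[simp] lemma sz_append (α β : List (Fin m × ℕ)) : sz (α ++ β) = sz α + sz β := by simp [sz]

lemma cover_sz {γ δ : List (Fin m × ℕ)} (h : CCover m γ δ) : sz δ = sz γ + 1 := by
  rcases h with ⟨rfl, c, rfl⟩ | ⟨l, r, c, a, rfl, rfl⟩ | ⟨l, r, c, a, hh, hlt, rfl, rfl⟩ |
    ⟨l, r, c, c', a, hh, hne, hle, rfl, rfl⟩
  · rfl
  · simp; omega
  · simp; omega
  · split_ifs <;> simp <;> omega

lemma sub_mono (L R : List (Fin m)) {X Y : List (Fin m)} (h : X <+ Y) :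
    L ++ (X ++ R) <+ L ++ (Y ++ R) := (h.append_right R).append_left L

lemma cover_wrd {γ δ : List (Fin m × ℕ)} (h : CCover m γ δ) : wrd γ <+ wrd δ := by
  rcases h with ⟨rfl, c, rfl⟩ | ⟨l, r, c, a, rfl, rfl⟩ | ⟨l, r, c, a, hh, hlt, rfl, rfl⟩ |
    ⟨l, r, c, c', a, hh, hne, hle, rfl, rfl⟩
  · simp
  · simp only [wrd_append, wrd_cons, List.append_assoc]
    exact sub_mono _ _ ((List.replicate_sublist_replicate c).2 (Nat.le_succ a))
  · simp only [wrd_append, wrd_cons, List.append_assoc, ← List.replicate_add]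
    have e : replicate (hh + 1) c ++ (replicate (a - hh) c ++ wrd r)
        = replicate (hh + 1 + (a - hh)) c ++ wrd r := by
      rw [← List.append_assoc, ← List.replicate_add]
    rw [e]
    exact sub_mono _ _ ((List.replicate_sublist_replicate c).2 (by omega))
  · have e1 : wrd (if hh = 0 then ([] : List (Fin m × ℕ)) else [(c, hh)]) =
        replicate hh c := by split <;> simp_all
    have e2 : wrd (if hh = a then ([] : List (Fin m × ℕ)) else [(c, a - hh)]) =
        replicate (a - hh) c := by split <;> simp_all
    have key : replicate a c <+ replicate hh c ++ c' :: replicate (a - hh) c := by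
      have e3 : replicate a c = replicate hh c ++ replicate (a - hh) c := by
        rw [← List.replicate_add]; congr 1; omega
      rw [e3]
      exact ((Sublist.refl _).cons c').append_left _
    simp only [wrd_append, wrd_cons, e1, e2, List.append_assoc]
    simpa using sub_mono (wrd l) (wrd r) key

def PosParts (α : List (Fin m × ℕ)) : Prop := ∀ p ∈ α, 0 < p.2

@[simp] lemma posParts_nil : PosParts ([] : List (Fin m × ℕ)) := by simp [PosParts]

@[simp] lemma posParts_cons {p : Fin m × ℕ} {x : List (Fin m × ℕ)} :
    PosParts (p :: x) ↔ 0 < p.2 ∧ PosParts x := by simp [PosParts]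

@[simp] lemma posParts_append {x y : List (Fin m × ℕ)} :
    PosParts (x ++ y) ↔ PosParts x ∧ PosParts y := by
  simp [PosParts, or_imp, forall_and]

lemma cover_pos {γ δ : List (Fin m × ℕ)} (h : CCover m γ δ) (hγ : PosParts γ) : PosParts δ := by
  rcases h with ⟨rfl, c, rfl⟩ | ⟨l, r, c, a, rfl, rfl⟩ | ⟨l, r, c, a, hh, hlt, rfl, rfl⟩ |
    ⟨l, r, c, c', a, hh, hne, hle, rfl, rfl⟩
  · simp
  · simp only [posParts_append, posParts_cons] at hγ ⊢
    exact ⟨hγ.1, by omega, hγ.2.2⟩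
  · simp only [posParts_append, posParts_cons] at hγ ⊢
    exact ⟨hγ.1, by omega, by omega, hγ.2.2⟩
  · simp only [posParts_append, posParts_cons] at hγ ⊢
    obtain ⟨h1, _, h2⟩ := hγ
    split_ifs <;> simp_all <;> omega

lemma cle_pos {z : List (Fin m × ℕ)} (h : CLe m [] z) : PosParts z := by
  induction h with
  | refl => intro p hp; simp at hp
  | tail _ hc ih => exact cover_pos hc ih

lemma cle_sz {z α : List (Fin m × ℕ)} (h : CLe m z α) : z = α ∨ sz z < sz α := by
  induction h with
  | refl => exact Or.inl rfl
  | tail h1 hc ih =>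
    right
    have := cover_sz hc
    rcases ih with rfl | hlt <;> omega

lemma cle_wrd {z α : List (Fin m × ℕ)} (h : CLe m z α) : wrd z <+ wrd α := by
  induction h with
  | refl => exact Sublist.refl _
  | tail _ hc ih => exact ih.trans (cover_wrd hc)

/-- inserting a singleton part anywhere is a cover -/
lemma ins_cover (l r : List (Fin m × ℕ)) (c : Fin m) (hp : PosParts (l ++ r)) :
    CCover m (l ++ r) (l ++ (c, 1) :: r) := by
  match r with
  | (d, s) :: r' =>
    have hs : 0 < s := hp (d, s) (by simp)
    by_cases hcd : c = d
    · subst hcd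
      refine Or.inr (Or.inr (Or.inl ⟨l, r', c, s, 0, hs, rfl, ?_⟩))
      simp
    · refine Or.inr (Or.inr (Or.inr ⟨l, r', d, c, s, 0, hcd, Nat.zero_le s, rfl, ?_⟩))
      rw [if_pos rfl, if_neg (by omega)]
      simp
  | [] =>
    rcases List.eq_nil_or_concat l with rfl | ⟨l', ⟨d, t⟩, rfl⟩
    · exact Or.inl ⟨rfl, c, rfl⟩
    · have ht : 0 < t := hp (d, t) (by simp)
      by_cases hcd : c = d
      · subst hcd
        refine Or.inr (Or.inr (Or.inl ⟨l', [], c, t, t - 1, by omega, by simp, ?_⟩))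
        simp [show t - 1 + 1 = t by omega, show t - (t - 1) = 1 by omega]
      · refine Or.inr (Or.inr (Or.inr ⟨l', [], d, c, t, t, hcd, le_refl t, by simp, ?_⟩))
        rw [if_neg (by omega), if_pos rfl]
        simp

lemma cons_cover {p : Fin m × ℕ} (hp : 0 < p.2) {x y : List (Fin m × ℕ)}
    (h : CCover m x y) : CCover m (p :: x) (p :: y) := by
  rcases h with ⟨rfl, c, rfl⟩ | ⟨l, r, c, a, rfl, rfl⟩ | ⟨l, r, c, a, hh, hlt, rfl, rfl⟩ |
    ⟨l, r, c, c', a, hh, hne, hle, rfl, rfl⟩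
  · have := ins_cover [p] [] c (by simpa using hp)
    simpa using this
  · exact Or.inr (Or.inl ⟨p :: l, r, c, a, rfl, rfl⟩)
  · exact Or.inr (Or.inr (Or.inl ⟨p :: l, r, c, a, hh, hlt, rfl, rfl⟩))
  · exact Or.inr (Or.inr (Or.inr ⟨p :: l, r, c, c', a, hh, hne, hle, rfl, rfl⟩))

lemma cons_le {p : Fin m × ℕ} (hp : 0 < p.2) {x y : List (Fin m × ℕ)}
    (h : CLe m x y) : CLe m (p :: x) (p :: y) := by
  induction h with
  | refl => exact Relation.ReflTransGen.refl
  | tail _ hc ih => exact ih.tail (cons_cover hp hc)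

lemma bump_le {c : Fin m} {s t : ℕ} (h : s ≤ t) (x : List (Fin m × ℕ)) :
    CLe m ((c, s) :: x) ((c, t) :: x) := by
  induction t, h using Nat.le_induction with
  | base => exact Relation.ReflTransGen.refl
  | succ n hn ih => exact ih.tail (Or.inr (Or.inl ⟨[], x, c, n, rfl, rfl⟩))

/-- the key reachability lemma: every alternating subword of `wrd α` gives a
composition below `α`. -/
lemma reach : ∀ (α : List (Fin m × ℕ)), PosParts α → ∀ u : List (Fin m),
    u.IsChain (· ≠ ·) → u <+ wrd α → CLe m (u.map fun c => (c, 1)) α := by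
  intro α
  induction α with
  | nil =>
    intro _ u _ hu
    simp only [wrd_nil, List.sublist_nil] at hu
    subst hu
    exact Relation.ReflTransGen.refl
  | cons p α' ih =>
    obtain ⟨c, a⟩ := p
    intro hpos u hchain hu
    have hpos' : PosParts α' := (posParts_cons.1 hpos).2
    have ha : 0 < a := by simpa using (posParts_cons.1 hpos).1
    rw [wrd_cons] at hu
    obtain ⟨u₁, u₂, rfl, h1, h2⟩ := List.sublist_append_iff.1 hu
    obtain ⟨b, hb, rfl⟩ := List.sublist_replicate_iff.1 h1
    have hu₂ : u₂.IsChain (· ≠ ·) := (List.isChain_append.1 hchain).2.1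
    have ihle : CLe m (u₂.map fun c => (c, 1)) α' := ih hpos' u₂ hu₂ h2
    have hb1 : b ≤ 1 := by
      by_contra hb2
      have : b = (b - 2) + 1 + 1 := by omega
      rw [this, List.replicate_succ, List.replicate_succ] at hchain
      simp only [List.cons_append, List.isChain_cons_cons] at hchain
      exact hchain.1 rfl
    interval_cases b
    · -- u = u₂ ; go α' ≤ (c,1)::α' ≤ (c,a)::α'
      simp only [List.replicate_zero, List.nil_append]
      have s1 : CLe m α' ((c, 1) :: α') :=
        Relation.ReflTransGen.single (by simpa using ins_cover [] α' c hpos')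
      have s2 : CLe m ((c, 1) :: α') ((c, a) :: α') := bump_le ha α'
      exact ihle.trans (s1.trans s2)
    · -- u = c :: u₂
      simp only [List.replicate_one, List.cons_append, List.map_cons]
      have s1 : CLe m ((c, 1) :: u₂.map fun c => (c, 1)) ((c, 1) :: α') :=
        cons_le (by simp) ihle
      exact s1.trans (bump_le ha α')

lemma wrd_ones {z : List (Fin m × ℕ)} (h : ∀ p ∈ z, p.2 = 1) : wrd z = z.map Prod.fst := by
  induction z with
  | nil => rfl
  | cons p t ih =>
    have hp : p.2 = 1 := h p (by simp)
    simp only [wrd_cons, hp, List.replicate_one, List.map_cons, List.singleton_append,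
      List.cons.injEq, true_and]
    exact ih fun q hq => h q (by simp [hq])

lemma ones_eq {z : List (Fin m × ℕ)} (h : ∀ p ∈ z, p.2 = 1) :
    (z.map Prod.fst).map (fun c => (c, 1)) = z := by
  induction z with
  | nil => rfl
  | cons p t ih =>
    have hp : p.2 = 1 := h p (by simp)
    simp only [List.map_cons, List.cons.injEq]
    exact ⟨by rw [← hp], ih fun q hq => h q (by simp [hq])⟩

lemma wrd_comp (u : List (Fin m)) : wrd (u.map fun c => (c, 1)) = u := by
  induction u with
  | nil => rfl
  | cons c t ih => simp [ih]

lemma sz_ones {z : List (Fin m × ℕ)} (h : ∀ p ∈ z, p.2 = 1) : sz z = z.length := by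
  induction z with
  | nil => rfl
  | cons p t ih =>
    have hp : p.2 = 1 := h p (by simp)
    simp only [sz_cons, hp, List.length_cons]
    rw [ih fun q hq => h q (by simp [hq])]; omega

lemma length_le_sz {z : List (Fin m × ℕ)} (h : PosParts z) : z.length ≤ sz z := by
  induction z with
  | nil => simp
  | cons p t ih =>
    have := posParts_cons.1 h
    have := ih this.2
    simp only [List.length_cons, sz_cons]
    omega

lemma part_le_sz {z : List (Fin m × ℕ)} {p : Fin m × ℕ} (hp : p ∈ z) : p.2 ≤ sz z := by
  induction z with
  | nil => simp at hp
  | cons q t ih =>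
    rcases List.mem_cons.1 hp with rfl | h
    · simp
    · have := ih h; simp; omega

lemma interval_finite (α : List (Fin m × ℕ)) :
    {z : List (Fin m × ℕ) | CLe m [] z ∧ CLe m z α}.Finite := by
  set n := sz α with hn
  have hfin : {l : List (Fin m × Fin (n + 1)) | l.length ≤ n}.Finite :=
    List.finite_length_le _ n
  refine Set.Finite.subset (hfin.image (List.map fun q => (q.1, (q.2 : ℕ)))) ?_
  rintro z ⟨h0, hα⟩
  have hpos : PosParts z := cle_pos h0
  have hsz : sz z ≤ n := by
    rcases cle_sz hα with rfl | h
    · omega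
    · omega
  refine ⟨z.map fun p => (p.1, ⟨min p.2 n, by omega⟩), ?_, ?_⟩
  · simp only [Set.mem_setOf_eq, List.length_map]
    exact (length_le_sz hpos).trans hsz
  · rw [List.map_map]
    conv_rhs => rw [← List.map_id z]
    refine List.map_congr_left fun p hp => ?_
    have := part_le_sz hp
    simp only [Function.comp_apply, id]
    have : min p.2 n = p.2 := by omega
    rw [this]

lemma alt_sum {v : List (Fin m)} (hv : v ≠ []) :
    ∑ u ∈ (v.sublists.toFinset.filter fun u => u.IsChain (· ≠ ·)),
      ((-1 : ℤ)) ^ u.length = 0 := by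
  obtain ⟨d, v', rfl⟩ : ∃ d v', v = d :: v' := by
    cases v with
    | nil => exact absurd rfl hv
    | cons d v' => exact ⟨d, v', rfl⟩
  set U : Finset (List (Fin m)) :=
    ((d :: v').sublists.toFinset.filter fun u => u.IsChain (· ≠ ·)) with hU
  rw [← Finset.sum_filter_add_sum_filter_not U (fun u => u.head? = some d)]
  have key : ∑ u ∈ U.filter (fun u => u.head? = some d), ((-1 : ℤ)) ^ u.length
      = ∑ u ∈ U.filter (fun u => ¬ u.head? = some d), ((-1 : ℤ)) ^ (u.length + 1) := by
    refine Finset.sum_nbij' (fun u => u.tail) (fun u => d :: u) ?_ ?_ ?_ ?_ ?_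
    · -- tail maps into
      intro u hu
      simp only [Finset.mem_filter, List.mem_toFinset, List.mem_sublists, hU] at hu ⊢
      obtain ⟨⟨hsub, hch⟩, hhd⟩ := hu
      obtain ⟨t, rfl⟩ : ∃ t, u = d :: t := by
        cases u with
        | nil => simp at hhd
        | cons y t => simp only [List.head?_cons, Option.some.injEq] at hhd; exact ⟨t, by rw [hhd]⟩
      refine ⟨⟨(List.sublist_cons_self d t).trans hsub, hch.tail⟩, ?_⟩
      simp only [List.tail_cons]
      cases t with
      | nil => simp
      | cons z t' =>
        simp only [List.head?_cons, Option.some.injEq]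
        have hne := (List.isChain_cons_cons.1 hch).1
        exact fun h => hne h.symm
    · -- cons maps into
      intro u hu
      simp only [Finset.mem_filter, List.mem_toFinset, List.mem_sublists, hU] at hu ⊢
      obtain ⟨⟨hsub, hch⟩, hhd⟩ := hu
      have hsub' : u <+ v' := by
        cases u with
        | nil => exact List.nil_sublist v'
        | cons y t =>
          cases hsub with
          | cons _ h => exact h
          | cons_cons => simp at hhd
      refine ⟨⟨hsub'.cons₂ d, ?_⟩, by simp⟩
      rw [List.isChain_cons]
      refine ⟨?_, hch⟩
      intro b hb hdb
      cases u with
      | nil => simp at hb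
      | cons y t =>
        have hyb : y = b := by simpa using hb
        apply hhd
        simp [hyb, hdb]
    · -- right inverse on filter P : d :: tail u = u
      intro u hu
      simp only [Finset.mem_filter, hU] at hu
      obtain ⟨_, hhd⟩ := hu
      cases u with
      | nil => simp at hhd
      | cons y t => simp only [List.head?_cons, Option.some.injEq] at hhd; rw [hhd]; rfl
    · intro u _; rfl
    · intro u hu
      simp only [Finset.mem_filter, hU] at hu
      obtain ⟨_, hhd⟩ := hu
      cases u with
      | nil => simp at hhd
      | cons y t =>
        simp only [List.head?_cons, Option.some.injEq] at hhd
        simp [List.length_cons]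
  rw [key]
  have : ∀ u : List (Fin m), ((-1 : ℤ)) ^ (u.length + 1) = -((-1 : ℤ)) ^ u.length := by
    intro u; rw [pow_succ]; ring
  simp only [this, Finset.sum_neg_distrib]
  ring

lemma wrd_ne_nil {β : List (Fin m × ℕ)} (hne : β ≠ []) (hpos : PosParts β) : wrd β ≠ [] := by
  cases β with
  | nil => exact absurd rfl hne
  | cons p t =>
    intro h
    rw [wrd_cons] at h
    have h1 := (List.append_eq_nil_iff.1 h).1
    have hp : 0 < p.2 := (posParts_cons.1 hpos).1
    rw [List.replicate_eq_nil_iff] at h1  -- p.2 = 0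
    omega

/-- Möbius function of lower intervals in `Co^(m)` for `m ≥ 2`: if `μ` satisfies
the defining recursion of the Möbius function of the poset `Co^(m)`, then for a
nonempty `m`-colored composition `α`, `μ(∅, α) = (-1)^|α|` when all parts of `α`
have size 1 and no two consecutive parts share a color, and `μ(∅, α) = 0`
otherwise. -/
theorem mobius_lower_interval (m : ℕ) (hm : 2 ≤ m)
    (μ : List (Fin m × ℕ) → List (Fin m × ℕ) → ℤ)
    (hrefl : ∀ x, μ x x = 1)
    (hrec : ∀ x y, CLe m x y → x ≠ y →
      (∑ᶠ z ∈ {z | CLe m x z ∧ CLe m z y}, μ x z) = 0)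
    (α : List (Fin m × ℕ)) (hne : α ≠ []) (hpos : ∀ p ∈ α, 0 < p.2) :
    μ [] α = if (∀ p ∈ α, p.2 = 1) ∧ α.IsChain (fun p q => p.1 ≠ q.1)
      then (-1) ^ (α.map Prod.snd).sum else 0 := by
  classical
  have key : ∀ n (β : List (Fin m × ℕ)), sz β = n → β ≠ [] → PosParts β →
      μ [] β = if (∀ p ∈ β, p.2 = 1) ∧ β.IsChain (fun p q => p.1 ≠ q.1)
        then (-1 : ℤ) ^ (sz β) else 0 := by
    intro n
    induction n using Nat.strong_induction_on with
    | _ n ih =>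
      intro β hszn hne hpos
      set F : List (Fin m × ℕ) → ℤ := fun z =>
        if (∀ p ∈ z, p.2 = 1) ∧ z.IsChain (fun p q => p.1 ≠ q.1) then (-1 : ℤ) ^ (sz z) else 0
        with hF
      show μ [] β = F β
      have h0β : CLe m [] β := by
        have := reach β hpos [] (by simp) (by simp)
        simpa using this
      have hS : ({z : List (Fin m × ℕ) | CLe m [] z ∧ CLe m z β}).Finite := interval_finite β
      have hrec0 := hrec [] β h0β (fun h => hne h.symm)
      rw [← Set.Finite.coe_toFinset hS, finsum_mem_coe_finset] at hrec0
      set T := hS.toFinset with hT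
      have hβT : β ∈ T := by
        rw [hT, Set.Finite.mem_toFinset]
        exact ⟨h0β, Relation.ReflTransGen.refl⟩
      have herase : ∀ z ∈ T.erase β, μ [] z = F z := by
        intro z hz
        have hzβ : z ≠ β := Finset.ne_of_mem_erase hz
        have hzT : z ∈ T := Finset.mem_of_mem_erase hz
        rw [hT, Set.Finite.mem_toFinset] at hzT
        obtain ⟨hz0, hzle⟩ := hzT
        by_cases hznil : z = []
        · subst hznil
          rw [hrefl]
          simp [hF]
        · have hzpos : PosParts z := cle_pos hz0
          have hlt : sz z < n := by
            rcases cle_sz hzle with rfl | h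
            · exact absurd rfl hzβ
            · omega
          exact ih (sz z) hlt z rfl hznil hzpos
      -- the sum of F over the whole interval vanishes
      have hsumF : ∑ z ∈ T, F z = 0 := by
        have hfil : ∑ z ∈ T, F z
            = ∑ z ∈ T.filter (fun z => (∀ p ∈ z, p.2 = 1) ∧
                z.IsChain (fun p q => p.1 ≠ q.1)), ((-1 : ℤ)) ^ (sz z) := by
          rw [Finset.sum_filter]
        rw [hfil]
        have hbij : ∑ z ∈ T.filter (fun z => (∀ p ∈ z, p.2 = 1) ∧
              z.IsChain (fun p q => p.1 ≠ q.1)), ((-1 : ℤ)) ^ (sz z)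
            = ∑ u ∈ ((wrd β).sublists.toFinset.filter fun u => u.IsChain (· ≠ ·)),
              ((-1 : ℤ)) ^ u.length := by
          refine Finset.sum_nbij' (fun z => z.map Prod.fst) (fun u => u.map fun c => (c, 1))
            ?_ ?_ ?_ ?_ ?_
          · intro z hz
            rw [Finset.mem_filter] at hz
            obtain ⟨hzT', hones, hch⟩ := hz
            rw [hT, Set.Finite.mem_toFinset] at hzT'
            rw [Finset.mem_filter, List.mem_toFinset, List.mem_sublists]
            constructor
            · show z.map Prod.fst <+ wrd β
              rw [← wrd_ones hones]
              exact cle_wrd hzT'.2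
            · exact (List.isChain_map Prod.fst).2 hch
          · intro u hu
            rw [Finset.mem_filter, List.mem_toFinset, List.mem_sublists] at hu
            obtain ⟨hsub, hch⟩ := hu
            have hupos : PosParts (u.map fun c => (c, 1)) := by
              intro p hp
              simp only [List.mem_map] at hp
              obtain ⟨c, _, rfl⟩ := hp
              simp
            rw [Finset.mem_filter, hT, Set.Finite.mem_toFinset]
            refine ⟨⟨?_, reach β hpos u hch hsub⟩, ?_, ?_⟩
            · have := reach (u.map fun c => (c, 1)) hupos [] (by simp) (by simp)
              simpa using this
            · intro p hp
              simp only [List.mem_map] at hp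
              obtain ⟨c, _, rfl⟩ := hp
              rfl
            · exact (List.isChain_map (fun c => (c, 1))).2 (by simpa using hch)
          · intro z hz
            rw [Finset.mem_filter] at hz
            exact ones_eq hz.2.1
          · intro u _
            simp [List.map_map, Function.comp_def]
          · intro z hz
            rw [Finset.mem_filter] at hz
            rw [sz_ones hz.2.1, List.length_map]
        rw [hbij]
        exact alt_sum (wrd_ne_nil hne hpos)
      have e1 : μ [] β + ∑ z ∈ T.erase β, μ [] z = 0 := by
        rw [Finset.add_sum_erase T (μ []) hβT]
        exact hrec0
      have e2 : F β + ∑ z ∈ T.erase β, F z = 0 := by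
        rw [Finset.add_sum_erase T F hβT]
        exact hsumF
      have e3 : ∑ z ∈ T.erase β, μ [] z = ∑ z ∈ T.erase β, F z :=
        Finset.sum_congr rfl herase
      rw [e3] at e1
      linarith
  exact key (sz α) α rfl hne hpos
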